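/- Let ξ_n > 0 and η_n > 0 be sequences with sup_n ξ_n²/n < ∞, let k_n be integers with 1 ≤ k_n < n, and fix σ ∈ (0,∞). Then p̃_n(θ, σ) → 0 as n → ∞ for every θ ∈ ℝ with θ ≠ 0 if and only if ξ_n η_n → 0 as n → ∞. -/

import Mathlib

open MeasureTheory ProbabilityTheory Filter Set

/-- Standard normal cdf. -/
noncomputable def Phi (x : ℝ) : ℝ :=
  ∫ t in Iic x, (Real.sqrt (2 * Real.pi))⁻¹ * Real.exp (-t ^ 2 / 2)

/-- Standard normal pdf. -/
noncomputable def stdPhi (t : ℝ) : ℝ :=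
  (Real.sqrt (2 * Real.pi))⁻¹ * Real.exp (-t ^ 2 / 2)

/-- Extension of `Phi` to the extended reals, with `PhiE ⊤ = 1` and `PhiE ⊥ = 0`. -/
noncomputable def PhiE (z : EReal) : ℝ :=
  if z = ⊤ then 1 else if z = ⊥ then 0 else Phi z.toReal

/-- Density of `m^{-1/2}` times the square root of a chi-square with `m` degrees of freedom. -/
noncomputable def rho (m : ℕ) (s : ℝ) : ℝ :=
  if 0 < s then
    (2 : ℝ) ^ ((1 : ℝ) - (m : ℝ) / 2) * (Real.Gamma ((m : ℝ) / 2))⁻¹ * Real.sqrt m *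
      ((m : ℝ) * s ^ 2) ^ (((m : ℝ) - 1) / 2) * Real.exp (-(m : ℝ) * s ^ 2 / 2)
  else 0

/-- Unknown-variance variable deletion probability with `m` degrees of freedom. -/
noncomputable def ptdel (n m : ℕ) (ξ η θ σ : ℝ) : ℝ :=
  ∫ s in Ioi (0 : ℝ),
    (Phi (Real.sqrt n * (-θ / (σ * ξ) + s * η)) -
      Phi (Real.sqrt n * (-θ / (σ * ξ) - s * η))) * rho m s

/-! ### Properties of the standard normal cdf -/

lemma stdPhi_pos (t : ℝ) : 0 < stdPhi t := by
  unfold stdPhi; positivity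

lemma stdPhi_mono {t c : ℝ} (h : c ^ 2 ≤ t ^ 2) : stdPhi t ≤ stdPhi c := by
  unfold stdPhi
  have h2 : Real.exp (-t ^ 2 / 2) ≤ Real.exp (-c ^ 2 / 2) := Real.exp_le_exp.2 (by linarith)
  have h3 : (0:ℝ) ≤ (Real.sqrt (2 * Real.pi))⁻¹ := by positivity
  exact mul_le_mul_of_nonneg_left h2 h3

lemma integrable_stdPhi : Integrable stdPhi := by
  have h := (integrable_exp_neg_mul_sq (by norm_num : (0:ℝ) < 1/2)).const_mul
    (Real.sqrt (2 * Real.pi))⁻¹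
  have he : stdPhi = fun t => (Real.sqrt (2 * Real.pi))⁻¹ * Real.exp (-(1/2) * t ^ 2) := by
    funext t; unfold stdPhi; ring_nf
  rw [he]; exact h

lemma integral_stdPhi : ∫ t, stdPhi t = 1 := by
  have he : stdPhi = fun t => (Real.sqrt (2 * Real.pi))⁻¹ * Real.exp (-(1/2) * t ^ 2) := by
    funext t; unfold stdPhi; ring_nf
  rw [he, integral_const_mul, integral_gaussian, show (Real.pi / (1/2)) = 2 * Real.pi by ring,
    inv_mul_cancel₀]
  positivity

lemma Phi_eq (x : ℝ) : Phi x = ∫ t in Iic x, stdPhi t := rfl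

lemma Phi_mono : Monotone Phi := by
  intro a b hab
  rw [Phi_eq, Phi_eq]
  exact setIntegral_mono_set integrable_stdPhi.integrableOn
    (Filter.Eventually.of_forall fun t => (stdPhi_pos t).le)
    (HasSubset.Subset.eventuallyLE (Iic_subset_Iic.2 hab))

lemma Phi_nonneg (x : ℝ) : 0 ≤ Phi x :=
  setIntegral_nonneg measurableSet_Iic fun t _ => (stdPhi_pos t).le

lemma Phi_le_one (x : ℝ) : Phi x ≤ 1 := by
  rw [Phi_eq, ← integral_stdPhi]
  exact setIntegral_le_integral integrable_stdPhi
    (Filter.Eventually.of_forall fun t => (stdPhi_pos t).le)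

lemma Phi_sub_Phi (a b : ℝ) (hab : a ≤ b) :
    Phi b - Phi a = ∫ t in Ioc a b, stdPhi t := by
  rw [Phi_eq, Phi_eq, intervalIntegral.integral_Iic_sub_Iic integrable_stdPhi.integrableOn
    integrable_stdPhi.integrableOn, intervalIntegral.integral_of_le hab]

lemma Phi_zero : Phi 0 = 1/2 := by
  have h1 : Phi 0 + ∫ t in Ioi (0:ℝ), stdPhi t = 1 := by
    rw [Phi_eq, intervalIntegral.integral_Iic_add_Ioi integrable_stdPhi.integrableOn
      integrable_stdPhi.integrableOn, integral_stdPhi]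
  have h2 : ∫ t in Ioi (0:ℝ), stdPhi t = Phi 0 := by
    have h3 : ∫ t in Ioi (0:ℝ), stdPhi t = ∫ t in Ioi (0:ℝ), stdPhi (-t) := by
      apply setIntegral_congr_fun measurableSet_Ioi
      intro t _
      simp [stdPhi, neg_sq]
    rw [h3, integral_comp_neg_Ioi, neg_zero, Phi_eq]
  rw [h2] at h1; linarith

lemma Phi_neg (x : ℝ) : Phi (-x) = 1 - Phi x := by
  have h1 : Phi x + ∫ t in Ioi x, stdPhi t = 1 := by
    rw [Phi_eq, intervalIntegral.integral_Iic_add_Ioi integrable_stdPhi.integrableOn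
      integrable_stdPhi.integrableOn, integral_stdPhi]
  have h2 : ∫ t in Ioi x, stdPhi t = Phi (-x) := by
    have h3 : ∫ t in Ioi x, stdPhi t = ∫ t in Ioi x, stdPhi (-t) := by
      apply setIntegral_congr_fun measurableSet_Ioi
      intro t _
      simp [stdPhi, neg_sq]
    rw [h3, integral_comp_neg_Ioi, Phi_eq]
  linarith

lemma measurable_Phi : Measurable Phi := Phi_mono.measurable

lemma Phi_sub_Phi_le (a b c : ℝ) (hab : a ≤ b) (hc : 0 ≤ c) (hbc : b ≤ -c) :
    Phi b - Phi a ≤ (b - a) * stdPhi c := by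
  rw [Phi_sub_Phi a b hab]
  calc ∫ t in Ioc a b, stdPhi t ≤ ∫ _ in Ioc a b, stdPhi c := by
        apply setIntegral_mono_on integrable_stdPhi.integrableOn
          (integrableOn_const (by simp) (by simp)) measurableSet_Ioc
        intro t ht
        obtain ⟨ht1, ht2⟩ := ht
        have hx1 : (0:ℝ) ≤ -c - t := by linarith
        have hx2 : (0:ℝ) ≤ -t + c := by linarith
        exact stdPhi_mono (by nlinarith [mul_nonneg hx1 hx2])
    _ = (b - a) * stdPhi c := by
        rw [setIntegral_const, smul_eq_mul, measureReal_def, Real.volume_Ioc, ENNReal.toReal_ofReal (by linarith)]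

lemma Phi_pos_gt (c : ℝ) (hc : 0 < c) : 1/2 < Phi c := by
  have h : Phi c - Phi 0 = ∫ t in Ioc 0 c, stdPhi t := Phi_sub_Phi 0 c hc.le
  have hlb : (c - 0) * stdPhi c ≤ ∫ t in Ioc 0 c, stdPhi t := by
    calc (c - 0) * stdPhi c = ∫ _ in Ioc (0:ℝ) c, stdPhi c := by
          rw [setIntegral_const, smul_eq_mul, measureReal_def, Real.volume_Ioc, ENNReal.toReal_ofReal (by linarith)]
      _ ≤ _ := by
          apply setIntegral_mono_on (integrableOn_const (by simp) (by simp))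
            integrable_stdPhi.integrableOn measurableSet_Ioc
          intro t ht
          exact stdPhi_mono (by nlinarith [ht.1, ht.2])
  have := stdPhi_pos c
  rw [Phi_zero] at h
  nlinarith

lemma mul_exp_neg_sq_le {α x : ℝ} (hα : 0 < α) (hx : 0 ≤ x) :
    x * Real.exp (-(α * x ^ 2)) ≤ (2 * Real.sqrt α)⁻¹ := by
  have hs : 0 < Real.sqrt α := Real.sqrt_pos.2 hα
  have hP : 0 < 1 + α * x ^ 2 := by positivity
  have e1 : Real.exp (-(α * x ^ 2)) ≤ (1 + α * x ^ 2)⁻¹ := by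
    rw [Real.exp_neg]
    apply inv_anti₀ hP
    have := Real.add_one_le_exp (α * x ^ 2)
    linarith
  calc x * Real.exp (-(α * x ^ 2)) ≤ x * (1 + α * x ^ 2)⁻¹ :=
        mul_le_mul_of_nonneg_left e1 hx
    _ ≤ (2 * Real.sqrt α)⁻¹ := by
        rw [← div_eq_mul_inv, inv_eq_one_div, div_le_div_iff₀ hP (by positivity)]
        nlinarith [sq_nonneg (1 - Real.sqrt α * x), Real.sq_sqrt hα.le]

/-! ### Properties of the chi density -/

lemma Gamma_half_pos {m : ℕ} (hm : 1 ≤ m) : 0 < Real.Gamma ((m : ℝ)/2) := by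
  have : (0:ℝ) < m := by exact_mod_cast hm
  exact Real.Gamma_pos_of_pos (by positivity)

lemma rho_nonneg (m : ℕ) (s : ℝ) : 0 ≤ rho m s := by
  unfold rho
  split
  · rcases Nat.eq_zero_or_pos m with hm | hm
    · subst hm; simp [Real.Gamma_zero]
    · have h2 := Gamma_half_pos hm
      positivity
  · exact le_refl 0

lemma rho_of_nonpos {m : ℕ} {s : ℝ} (hs : ¬ 0 < s) : rho m s = 0 := if_neg hs

lemma measurable_rho (m : ℕ) : Measurable (rho m) := by
  unfold rho
  refine Measurable.ite measurableSet_Ioi ?_ measurable_const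
  fun_prop

/-- On `Ioi 0`, `rho m` agrees with a Gamma-type integrand. -/
lemma rho_eq_on {m : ℕ} (hm : 1 ≤ m) {s : ℝ} (hs : 0 < s) :
    rho m s = ((2 : ℝ) ^ ((1 : ℝ) - (m : ℝ) / 2) * (Real.Gamma ((m : ℝ) / 2))⁻¹ *
      (m : ℝ) ^ ((m : ℝ)/2)) * (s ^ ((m : ℝ) - 1) * Real.exp (-((m : ℝ)/2) * s ^ 2)) := by
  unfold rho
  rw [if_pos hs]
  have hmR : (0:ℝ) < m := by exact_mod_cast hm
  have h1 : ((m : ℝ) * s ^ 2) ^ (((m : ℝ) - 1) / 2)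
      = (m : ℝ) ^ (((m : ℝ) - 1) / 2) * s ^ ((m : ℝ) - 1) := by
    rw [Real.mul_rpow hmR.le (by positivity)]
    congr 1
    rw [← Real.rpow_natCast s 2, ← Real.rpow_mul hs.le]
    congr 1
    push_cast
    ring
  have h2 : Real.sqrt (m : ℝ) = (m : ℝ) ^ ((1:ℝ)/2) := by
    rw [Real.sqrt_eq_rpow]
  have h3 : (m : ℝ) ^ ((1:ℝ)/2) * (m : ℝ) ^ (((m : ℝ) - 1) / 2) = (m : ℝ) ^ ((m : ℝ)/2) := by
    rw [← Real.rpow_add hmR]; ring_nf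
  have h4 : Real.exp (-(m : ℝ) * s ^ 2 / 2) = Real.exp (-((m : ℝ)/2) * s ^ 2) := by
    congr 1; ring
  rw [h1, h2, h4, ← h3]
  ring

lemma rho_moment (m : ℕ) (hm : 1 ≤ m) (r : ℝ) (hr : 0 ≤ r) :
    ∫ s in Ioi (0:ℝ), s ^ r * rho m s
      = (2/(m:ℝ)) ^ (r/2) * Real.Gamma (((m:ℝ)+r)/2) / Real.Gamma ((m:ℝ)/2) := by
  have hmR : (0:ℝ) < m := by exact_mod_cast hm
  have hΓ := Gamma_half_pos hm
  set c : ℝ := (2 : ℝ) ^ ((1 : ℝ) - (m : ℝ) / 2) * (Real.Gamma ((m : ℝ) / 2))⁻¹ *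
      (m : ℝ) ^ ((m : ℝ)/2) with hc
  have step1 : ∫ s in Ioi (0:ℝ), s ^ r * rho m s
      = c * ∫ s in Ioi (0:ℝ), s ^ (r + ((m:ℝ) - 1)) * Real.exp (-((m : ℝ)/2) * s ^ (2:ℝ)) := by
    rw [← integral_const_mul]
    apply setIntegral_congr_fun measurableSet_Ioi
    intro s hs
    dsimp only
    rw [rho_eq_on hm hs, Real.rpow_add hs, ← Real.rpow_natCast s 2]
    push_cast
    ring
  rw [step1, integral_rpow_mul_exp_neg_mul_rpow two_pos (by linarith) (by positivity)]
  have exp_eq : r + ((m:ℝ) - 1) + 1 = r + m := by ring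
  rw [exp_eq]
  have h2m : ((m:ℝ)/2) ^ (-(r+(m:ℝ))/2) = (m:ℝ) ^ (-(r+(m:ℝ))/2) * (2:ℝ) ^ ((r+(m:ℝ))/2) := by
    rw [Real.div_rpow hmR.le (by norm_num : (0:ℝ) ≤ 2), div_eq_mul_inv,
      ← Real.rpow_neg (by norm_num : (0:ℝ) ≤ 2)]
    ring_nf
  have h2m' : (2/(m:ℝ)) ^ (r/2) = (2:ℝ)^(r/2) * (m:ℝ)^(-(r/2)) := by
    rw [Real.div_rpow (by norm_num : (0:ℝ) ≤ 2) hmR.le, div_eq_mul_inv,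
      ← Real.rpow_neg hmR.le]
  have hmm : (m:ℝ) ^ ((m:ℝ)/2) * (m:ℝ) ^ (-(r+(m:ℝ))/2) = (m:ℝ) ^ (-(r/2)) := by
    rw [← Real.rpow_add hmR]; ring_nf
  have h22 : (2:ℝ) ^ ((1:ℝ) - (m:ℝ)/2) * (2:ℝ) ^ ((r+(m:ℝ))/2) = 2 * (2:ℝ) ^ (r/2) := by
    rw [← Real.rpow_add two_pos, show (1:ℝ) - (m:ℝ)/2 + (r+(m:ℝ))/2 = 1 + r/2 by ring,
      Real.rpow_add two_pos, Real.rpow_one]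
  rw [hc, h2m, h2m', show (m:ℝ) + r = r + m by ring]
  calc (2:ℝ) ^ ((1:ℝ) - (m:ℝ)/2) * (Real.Gamma ((m:ℝ)/2))⁻¹ * (m:ℝ) ^ ((m:ℝ)/2) *
        ((m:ℝ) ^ (-(r+(m:ℝ))/2) * (2:ℝ) ^ ((r+(m:ℝ))/2) * (1/2) * Real.Gamma ((r+(m:ℝ))/2))
      = ((2:ℝ) ^ ((1:ℝ) - (m:ℝ)/2) * (2:ℝ) ^ ((r+(m:ℝ))/2)) *
        ((m:ℝ) ^ ((m:ℝ)/2) * (m:ℝ) ^ (-(r+(m:ℝ))/2)) * (1/2) * (Real.Gamma ((m:ℝ)/2))⁻¹ *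
        Real.Gamma ((r+(m:ℝ))/2) := by ring
    _ = (2 * (2:ℝ) ^ (r/2)) * ((m:ℝ) ^ (-(r/2))) * (1/2) * (Real.Gamma ((m:ℝ)/2))⁻¹ *
        Real.Gamma ((r+(m:ℝ))/2) := by rw [hmm, h22]
    _ = 2 ^ (r/2) * (m:ℝ) ^ (-(r/2)) * Real.Gamma ((r+(m:ℝ))/2) / Real.Gamma ((m:ℝ)/2) := by
        field_simp

lemma rho_integrableOn_rpow (m : ℕ) (hm : 1 ≤ m) (r : ℝ) (hr : 0 ≤ r) :
    IntegrableOn (fun s => s ^ r * rho m s) (Ioi (0:ℝ)) := by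
  have hmR : (0:ℝ) < m := by exact_mod_cast hm
  have base : IntegrableOn
      (fun s : ℝ => ((2 : ℝ) ^ ((1 : ℝ) - (m : ℝ) / 2) * (Real.Gamma ((m : ℝ) / 2))⁻¹ *
        (m : ℝ) ^ ((m : ℝ)/2)) * (s ^ (r + ((m:ℝ) - 1)) * Real.exp (-((m : ℝ)/2) * s ^ 2)))
      (Ioi (0:ℝ)) :=
    (integrableOn_rpow_mul_exp_neg_mul_sq (by positivity) (by linarith)).const_mul _
  apply base.congr_fun ?_ measurableSet_Ioi
  intro s hs
  dsimp only
  rw [rho_eq_on hm hs, Real.rpow_add hs]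
  ring

lemma rho_integrableOn (m : ℕ) (hm : 1 ≤ m) : IntegrableOn (rho m) (Ioi (0:ℝ)) := by
  have h := rho_integrableOn_rpow m hm 0 le_rfl
  apply h.congr_fun ?_ measurableSet_Ioi
  intro s hs
  dsimp only
  rw [Real.rpow_zero, one_mul]

lemma rho_integral_one (m : ℕ) (hm : 1 ≤ m) : ∫ s in Ioi (0:ℝ), rho m s = 1 := by
  have hΓ := Gamma_half_pos hm
  have h := rho_moment m hm 0 le_rfl
  rw [zero_div, Real.rpow_zero, one_mul, add_zero, div_self hΓ.ne'] at h
  rw [← h]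
  apply setIntegral_congr_fun measurableSet_Ioi
  intro s hs
  dsimp only
  rw [Real.rpow_zero, one_mul]

lemma rho_sq_integrableOn (m : ℕ) (hm : 1 ≤ m) :
    IntegrableOn (fun s => s ^ 2 * rho m s) (Ioi (0:ℝ)) := by
  have h := rho_integrableOn_rpow m hm 2 (by norm_num)
  apply h.congr_fun ?_ measurableSet_Ioi
  intro s hs
  dsimp only
  rw [show ((2:ℝ)) = ((2:ℕ):ℝ) by norm_num, Real.rpow_natCast]

lemma rho_pow4_integrableOn (m : ℕ) (hm : 1 ≤ m) :
    IntegrableOn (fun s => s ^ 4 * rho m s) (Ioi (0:ℝ)) := by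
  have h := rho_integrableOn_rpow m hm 4 (by norm_num)
  apply h.congr_fun ?_ measurableSet_Ioi
  intro s hs
  dsimp only
  rw [show ((4:ℝ)) = ((4:ℕ):ℝ) by norm_num, Real.rpow_natCast]

lemma rho_sq_integral (m : ℕ) (hm : 1 ≤ m) : ∫ s in Ioi (0:ℝ), s ^ 2 * rho m s = 1 := by
  have hmR : (0:ℝ) < m := by exact_mod_cast hm
  have hΓ := Gamma_half_pos hm
  have h := rho_moment m hm 2 (by norm_num)
  have hG : Real.Gamma (((m:ℝ)+2)/2) = ((m:ℝ)/2) * Real.Gamma ((m:ℝ)/2) := by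
    rw [show ((m:ℝ)+2)/2 = (m:ℝ)/2 + 1 by ring, Real.Gamma_add_one (by positivity)]
  norm_num at h
  rw [hG] at h
  rw [h]
  field_simp

lemma rho_pow4_integral (m : ℕ) (hm : 1 ≤ m) :
    ∫ s in Ioi (0:ℝ), s ^ 4 * rho m s = ((m:ℝ) + 2)/(m:ℝ) := by
  have hmR : (0:ℝ) < m := by exact_mod_cast hm
  have hΓ := Gamma_half_pos hm
  have h := rho_moment m hm 4 (by norm_num)
  have hG : Real.Gamma (((m:ℝ)+4)/2) = ((m:ℝ)/2+1) * (((m:ℝ)/2) * Real.Gamma ((m:ℝ)/2)) := by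
    rw [show ((m:ℝ)+4)/2 = ((m:ℝ)/2 + 1) + 1 by ring, Real.Gamma_add_one (by positivity),
      Real.Gamma_add_one (by positivity)]
  rw [hG] at h
  norm_num at h
  have h2 : ∫ s in Ioi (0:ℝ), s ^ 4 * rho m s = ∫ s in Ioi (0:ℝ), s ^ (4:ℝ) * rho m s := by
    apply setIntegral_congr_fun measurableSet_Ioi
    intro s hs
    dsimp only
    rw [show ((4:ℝ)) = ((4:ℕ):ℝ) by norm_num, Real.rpow_natCast]
  rw [h]
  field_simp

/-- Lower bound on the mass of `rho m` above `1/4`, uniform in `m`. -/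
lemma rho_tail (m : ℕ) (hm : 1 ≤ m) : (9/128:ℝ) ≤ ∫ s in Ici (1/4:ℝ), rho m s := by
  have hmR : (0:ℝ) < m := by exact_mod_cast hm
  have hm1 : (1:ℝ) ≤ m := by exact_mod_cast hm
  have hsub : Ici (1/4:ℝ) ⊆ Ioi 0 := fun t ht => lt_of_lt_of_le (by norm_num : (0:ℝ) < 1/4) ht
  have hsub2 : Ioo (0:ℝ) (1/4) ⊆ Ioi 0 := Ioo_subset_Ioi_self
  have i0 := rho_integrableOn m hm
  have i2 := rho_sq_integrableOn m hm
  have i4 := rho_pow4_integrableOn m hm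
  have hdisj : Disjoint (Ioo (0:ℝ) (1/4)) (Ici (1/4:ℝ)) :=
    (Iio_disjoint_Ici le_rfl).mono_left Ioo_subset_Iio_self
  have hsplit : (1:ℝ) = (∫ s in Ioo (0:ℝ) (1/4), s^2 * rho m s)
      + ∫ s in Ici (1/4:ℝ), s^2 * rho m s := by
    have h := setIntegral_union hdisj measurableSet_Ici (i2.mono_set hsub2) (i2.mono_set hsub)
    rw [Ioo_union_Ici_eq_Ioi (by norm_num : (0:ℝ) < 1/4)] at h
    exact (rho_sq_integral m hm).symm.trans h
  have h1 : ∫ s in Ioo (0:ℝ) (1/4), s^2 * rho m s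
      ≤ ∫ s in Ioo (0:ℝ) (1/4), (1/16) * rho m s := by
    apply setIntegral_mono_on (i2.mono_set hsub2) ((i0.mono_set hsub2).const_mul _)
      measurableSet_Ioo
    intro s hs
    nlinarith [mul_nonneg (show (0:ℝ) ≤ 1/16 - s^2 by nlinarith [hs.1, hs.2]) (rho_nonneg m s)]
  have h1b : ∫ s in Ioo (0:ℝ) (1/4), (1/16) * rho m s = (1/16) * ∫ s in Ioo (0:ℝ) (1/4), rho m s :=
    integral_const_mul _ _
  have h1c : ∫ s in Ioo (0:ℝ) (1/4), rho m s ≤ 1 := by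
    calc ∫ s in Ioo (0:ℝ) (1/4), rho m s ≤ ∫ s in Ioi (0:ℝ), rho m s :=
          setIntegral_mono_set i0 (Filter.Eventually.of_forall fun s => rho_nonneg m s)
            (HasSubset.Subset.eventuallyLE hsub2)
      _ = 1 := rho_integral_one m hm
  have hintRHS : IntegrableOn (fun s : ℝ => 8 * rho m s + (1/8) * (s^4 * rho m s))
      (Ici (1/4:ℝ)) := ((i0.mono_set hsub).const_mul 8).add ((i4.mono_set hsub).const_mul (1/8))
  have h2 : ∫ s in Ici (1/4:ℝ), s^2 * rho m s
      ≤ ∫ s in Ici (1/4:ℝ), (8 * rho m s + (1/8) * (s^4 * rho m s)) := by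
    apply setIntegral_mono_on (i2.mono_set hsub) hintRHS measurableSet_Ici
    intro s hs
    nlinarith [rho_nonneg m s, mul_nonneg (show (0:ℝ) ≤ 8 + s^4/8 - s^2 by
      nlinarith [sq_nonneg (s^2 - 8)]) (rho_nonneg m s)]
  have h2b : ∫ s in Ici (1/4:ℝ), (8 * rho m s + (1/8) * (s^4 * rho m s))
      = 8 * (∫ s in Ici (1/4:ℝ), rho m s) + (1/8) * ∫ s in Ici (1/4:ℝ), s^4 * rho m s := by
    rw [integral_add ((i0.mono_set hsub).const_mul 8) ((i4.mono_set hsub).const_mul (1/8)),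
      integral_const_mul, integral_const_mul]
  have h3 : ∫ s in Ici (1/4:ℝ), s^4 * rho m s ≤ 3 := by
    have hle : ∫ s in Ici (1/4:ℝ), s^4 * rho m s ≤ ∫ s in Ioi (0:ℝ), s^4 * rho m s := by
      apply setIntegral_mono_set i4 ?_ (HasSubset.Subset.eventuallyLE hsub)
      apply Filter.Eventually.of_forall
      intro s
      rcases le_or_gt s 0 with h | h
      · simp [rho_of_nonpos (not_lt.2 h)]
      · exact mul_nonneg (by positivity) (rho_nonneg m s)
    rw [rho_pow4_integral m hm] at hle
    have : ((m:ℝ) + 2)/(m:ℝ) ≤ 3 := by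
      rw [div_le_iff₀ hmR]; linarith
    linarith
  linarith

/-! ### The integrand -/

lemma measurable_F (n : ℕ) (ξ η θ σ : ℝ) :
    Measurable (fun s : ℝ => Phi (Real.sqrt n * (-θ / (σ * ξ) + s * η)) -
      Phi (Real.sqrt n * (-θ / (σ * ξ) - s * η))) :=
  (measurable_Phi.comp (by fun_prop)).sub (measurable_Phi.comp (by fun_prop))

lemma integrableOn_F_rho (n m : ℕ) (hm : 1 ≤ m) (ξ η θ σ : ℝ) :
    IntegrableOn (fun s : ℝ => (Phi (Real.sqrt n * (-θ / (σ * ξ) + s * η)) -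
      Phi (Real.sqrt n * (-θ / (σ * ξ) - s * η))) * rho m s) (Ioi (0:ℝ)) := by
  apply Integrable.mono' (rho_integrableOn m hm)
    (((measurable_F n ξ η θ σ).mul (measurable_rho m)).aestronglyMeasurable.restrict)
  filter_upwards with s
  simp only [Pi.mul_apply]
  rw [Real.norm_eq_abs, abs_mul, abs_of_nonneg (rho_nonneg m s)]
  have h1 : |Phi (Real.sqrt n * (-θ / (σ * ξ) + s * η)) -
      Phi (Real.sqrt n * (-θ / (σ * ξ) - s * η))| ≤ 1 := by
    rw [abs_le]
    constructor
    · linarith [Phi_nonneg (Real.sqrt n * (-θ / (σ * ξ) + s * η)),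
        Phi_le_one (Real.sqrt n * (-θ / (σ * ξ) - s * η))]
    · linarith [Phi_le_one (Real.sqrt n * (-θ / (σ * ξ) + s * η)),
        Phi_nonneg (Real.sqrt n * (-θ / (σ * ξ) - s * η))]
  calc |Phi (Real.sqrt n * (-θ / (σ * ξ) + s * η)) -
      Phi (Real.sqrt n * (-θ / (σ * ξ) - s * η))| * rho m s
      ≤ 1 * rho m s := mul_le_mul_of_nonneg_right h1 (rho_nonneg m s)
    _ = rho m s := one_mul _

lemma F_rho_nonneg (n m : ℕ) {η : ℝ} (hη : 0 ≤ η) (ξ θ σ : ℝ) (s : ℝ) :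
    0 ≤ (Phi (Real.sqrt n * (-θ / (σ * ξ) + s * η)) -
      Phi (Real.sqrt n * (-θ / (σ * ξ) - s * η))) * rho m s := by
  by_cases hs : 0 < s
  · apply mul_nonneg _ (rho_nonneg m s)
    rw [sub_nonneg]
    apply Phi_mono
    have h := mul_nonneg (Real.sqrt_nonneg (n:ℝ)) (mul_nonneg (mul_nonneg hs.le hη) (by norm_num : (0:ℝ) ≤ 2))
    nlinarith [h]
  · rw [rho_of_nonpos hs, mul_zero]

lemma ptdel_nonneg (n m : ℕ) (ξ : ℝ) {η : ℝ} (hη : 0 ≤ η) (θ σ : ℝ) :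
    0 ≤ ptdel n m ξ η θ σ :=
  setIntegral_nonneg measurableSet_Ioi fun s _ => F_rho_nonneg n m hη ξ θ σ s

lemma ptdel_neg_theta (n m : ℕ) (ξ η θ σ : ℝ) :
    ptdel n m ξ η (-θ) σ = ptdel n m ξ η θ σ := by
  unfold ptdel
  apply setIntegral_congr_fun measurableSet_Ioi
  intro s _
  dsimp only
  rw [show Real.sqrt n * (-(-θ) / (σ * ξ) + s * η)
      = -(Real.sqrt n * (-θ / (σ * ξ) - s * η)) by ring,
    show Real.sqrt n * (-(-θ) / (σ * ξ) - s * η)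
      = -(Real.sqrt n * (-θ / (σ * ξ) + s * η)) by ring,
    Phi_neg, Phi_neg]
  ring
/-! ### Upper bound -/

lemma F_ptwise_le {n : ℕ} (hn : 1 ≤ n) {ξ η θ σ s : ℝ}
    (hξ : 0 < ξ) (hη : 0 < η) (hθ : 0 < θ) (hσ : 0 < σ) (hs : 0 < s) :
    Phi (Real.sqrt n * (-θ / (σ * ξ) + s * η)) - Phi (Real.sqrt n * (-θ / (σ * ξ) - s * η))
      ≤ ((Real.sqrt (2*Real.pi))⁻¹ * (Real.sqrt (θ^2/(8*σ^2)))⁻¹) * (ξ*η)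
        + ((Real.sqrt (2*Real.pi))⁻¹ * (Real.sqrt (θ^2/(8*σ^2)))⁻¹) * (ξ*η) * s^2
        + (2*σ*(ξ*η)/θ)^2 * s^2 := by
  set K : ℝ := (Real.sqrt (2*Real.pi))⁻¹ * (Real.sqrt (θ^2/(8*σ^2)))⁻¹ with hK
  set α : ℝ := θ^2/(8*σ^2) with hα
  have hαpos : 0 < α := by positivity
  have hKpos : 0 < K := by positivity
  have hnR : (0:ℝ) < n := by exact_mod_cast hn
  have hsn : 0 < Real.sqrt (n:ℝ) := Real.sqrt_pos.2 hnR
  set x : ℝ := ξ * η with hx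
  have hxpos : 0 < x := mul_pos hξ hη
  by_cases hsT : s * x ≤ θ/(2*σ)
  · -- small s : band bound
    set a : ℝ := Real.sqrt n * θ / (σ * ξ) with ha
    set h : ℝ := Real.sqrt n * s * η with hh
    have hapos : 0 < a := by positivity
    have hhpos : 0 < h := by positivity
    have e1 : Real.sqrt n * (-θ / (σ * ξ) + s * η) = -a + h := by rw [ha, hh]; ring
    have e2 : Real.sqrt n * (-θ / (σ * ξ) - s * η) = -a - h := by rw [ha, hh]; ring
    have hha : h ≤ a/2 := by
      have hsT2 : s * (ξ*η) * (2*σ) ≤ θ := by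
        have h0 : s * (ξ*η) ≤ θ/(2*σ) := by rwa [hx] at hsT
        rw [le_div_iff₀ (by positivity)] at h0
        linarith
      have h1 : s * η ≤ θ/(2*σ*ξ) := by
        rw [le_div_iff₀ (by positivity)]
        linarith [hsT2]
      have h2 := mul_le_mul_of_nonneg_left h1 (Real.sqrt_nonneg (n:ℝ))
      calc h = Real.sqrt n * (s * η) := by rw [hh]; ring
        _ ≤ Real.sqrt n * (θ/(2*σ*ξ)) := h2
        _ = a/2 := by rw [ha]; ring
    have key1 : Phi (-a + h) - Phi (-a - h) ≤ ((-a+h) - (-a-h)) * stdPhi (a/2) :=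
      Phi_sub_Phi_le _ _ _ (by linarith) (by positivity) (by linarith)
    set u : ℝ := Real.sqrt n / ξ with hu
    have hupos : 0 < u := by positivity
    have key2 : stdPhi (a/2) = (Real.sqrt (2*Real.pi))⁻¹ * Real.exp (-(α * u^2)) := by
      unfold stdPhi
      congr 2
      rw [ha, hu, hα]
      ring
    have key3 : u * Real.exp (-(α * u^2)) ≤ (2 * Real.sqrt α)⁻¹ :=
      mul_exp_neg_sq_le hαpos hupos.le
    have hmain : Phi (-a + h) - Phi (-a - h) ≤ K * s * x := by
      have hchain : ((-a+h) - (-a-h)) * stdPhi (a/2)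
          = (2 * s * x * (Real.sqrt (2*Real.pi))⁻¹) * (u * Real.exp (-(α * u^2))) := by
        rw [key2]
        have huh : h = u * s * x := by
          rw [hh, hu, hx]
          field_simp
        rw [huh]
        ring
      have hchain2 : (2 * s * x * (Real.sqrt (2*Real.pi))⁻¹) * (u * Real.exp (-(α * u^2)))
          ≤ (2 * s * x * (Real.sqrt (2*Real.pi))⁻¹) * (2 * Real.sqrt α)⁻¹ :=
        mul_le_mul_of_nonneg_left key3 (by positivity)
      have hchain3 : (2 * s * x * (Real.sqrt (2*Real.pi))⁻¹) * (2 * Real.sqrt α)⁻¹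
          = K * s * x := by
        rw [hK, mul_inv]
        ring
      calc Phi (-a + h) - Phi (-a - h) ≤ ((-a+h) - (-a-h)) * stdPhi (a/2) := key1
        _ = (2 * s * x * (Real.sqrt (2*Real.pi))⁻¹) * (u * Real.exp (-(α * u^2))) := hchain
        _ ≤ (2 * s * x * (Real.sqrt (2*Real.pi))⁻¹) * (2 * Real.sqrt α)⁻¹ := hchain2
        _ = K * s * x := hchain3
    rw [e1, e2]
    have hs1 : K * s * x ≤ K * x + K * x * s^2 := by
      nlinarith [mul_nonneg (mul_pos hKpos hxpos).le
        (show (0:ℝ) ≤ s^2 - s + 1 by nlinarith [sq_nonneg (s-1)])]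
    linarith [hmain, hs1, mul_nonneg (sq_nonneg (2*σ*x/θ)) (sq_nonneg s)]
  · -- large s : trivial bound
    push_neg at hsT
    have hsT2 : θ < s * x * (2*σ) := by
      rw [div_lt_iff₀ (by positivity)] at hsT
      linarith
    have h1 : (1:ℝ) ≤ 2*σ*(s*x)/θ := by
      rw [le_div_iff₀ hθ]
      linarith [hsT2]
    have h2 : (1:ℝ) ≤ (2*σ*x/θ)^2 * s^2 := by
      calc (1:ℝ) = 1 * 1 := by ring
        _ ≤ (2*σ*(s*x)/θ) * (2*σ*(s*x)/θ) := mul_le_mul h1 h1 (by norm_num) (by linarith)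
        _ = (2*σ*x/θ)^2 * s^2 := by ring
    have h3 : Phi (Real.sqrt n * (-θ / (σ * ξ) + s * η))
        - Phi (Real.sqrt n * (-θ / (σ * ξ) - s * η)) ≤ 1 := by
      linarith [Phi_le_one (Real.sqrt n * (-θ / (σ * ξ) + s * η)),
        Phi_nonneg (Real.sqrt n * (-θ / (σ * ξ) - s * η))]
    linarith [h3, h2, (mul_pos hKpos hxpos).le,
      mul_nonneg (mul_pos hKpos hxpos).le (sq_nonneg s)]

lemma ptdel_le {n m : ℕ} (hn : 1 ≤ n) (hm : 1 ≤ m) {ξ η θ σ : ℝ}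
    (hξ : 0 < ξ) (hη : 0 < η) (hθ : 0 < θ) (hσ : 0 < σ) :
    ptdel n m ξ η θ σ
      ≤ 2 * ((Real.sqrt (2*Real.pi))⁻¹ * (Real.sqrt (θ^2/(8*σ^2)))⁻¹) * (ξ*η)
        + (2*σ*(ξ*η)/θ)^2 := by
  set K : ℝ := (Real.sqrt (2*Real.pi))⁻¹ * (Real.sqrt (θ^2/(8*σ^2)))⁻¹ with hK
  set x : ℝ := ξ * η with hx
  set c2 : ℝ := (2*σ*x/θ)^2 with hc2
  have hA : IntegrableOn (fun s : ℝ => K * x * rho m s) (Ioi (0:ℝ)) :=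
    (rho_integrableOn m hm).const_mul _
  have hB : IntegrableOn (fun s : ℝ => K * x * (s^2 * rho m s)) (Ioi (0:ℝ)) :=
    (rho_sq_integrableOn m hm).const_mul _
  have hC2 : IntegrableOn (fun s : ℝ => c2 * (s^2 * rho m s)) (Ioi (0:ℝ)) :=
    (rho_sq_integrableOn m hm).const_mul _
  have hAB : IntegrableOn (fun s : ℝ => K * x * rho m s + K * x * (s^2 * rho m s))
      (Ioi (0:ℝ)) := hA.add hB
  have hG : IntegrableOn (fun s : ℝ => K * x * rho m s + K * x * (s^2 * rho m s)
      + c2 * (s^2 * rho m s)) (Ioi (0:ℝ)) := hAB.add hC2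
  unfold ptdel
  have step1 : ∫ s in Ioi (0:ℝ),
      (Phi (Real.sqrt n * (-θ / (σ * ξ) + s * η)) -
        Phi (Real.sqrt n * (-θ / (σ * ξ) - s * η))) * rho m s
      ≤ ∫ s in Ioi (0:ℝ), (K * x * rho m s + K * x * (s^2 * rho m s) + c2 * (s^2 * rho m s)) := by
    apply setIntegral_mono_on (integrableOn_F_rho n m hm ξ η θ σ) hG measurableSet_Ioi
    intro s hs
    have hptw := F_ptwise_le hn hξ hη hθ hσ hs
    calc (Phi (Real.sqrt n * (-θ / (σ * ξ) + s * η)) -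
          Phi (Real.sqrt n * (-θ / (σ * ξ) - s * η))) * rho m s
        ≤ (K * x + K * x * s^2 + c2 * s^2) * rho m s :=
          mul_le_mul_of_nonneg_right hptw (rho_nonneg m s)
      _ = K * x * rho m s + K * x * (s^2 * rho m s) + c2 * (s^2 * rho m s) := by ring
  have step2 : ∫ s in Ioi (0:ℝ),
      (K * x * rho m s + K * x * (s^2 * rho m s) + c2 * (s^2 * rho m s))
      = 2 * K * x + c2 := by
    rw [integral_add hAB hC2, integral_add hA hB,
      integral_const_mul, integral_const_mul, integral_const_mul,
      rho_integral_one m hm, rho_sq_integral m hm]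
    ring
  linarith [step1, step2.le, step2.ge]

/-! ### Lower bound -/

lemma ptdel_ge {n m : ℕ} (hn : 1 ≤ n) (hm : 1 ≤ m) {ξ η σ C ε : ℝ}
    (hξ : 0 < ξ) (hη : 0 < η) (hσ : 0 < σ) (hC : 0 < C) (hξn : ξ^2 ≤ C*n)
    (hε : 0 < ε) (hεle : ε ≤ ξ*η) :
    (Phi (ε/(8*Real.sqrt C)) - 1/2) * (9/128) ≤ ptdel n m ξ η (σ*ε/8) σ := by
  set θ : ℝ := σ*ε/8 with hθdef
  have hθ : 0 < θ := by rw [hθdef]; positivity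
  set c : ℝ := ε/(8*Real.sqrt C) with hcdef
  have hsC : 0 < Real.sqrt C := Real.sqrt_pos.2 hC
  have hcpos : 0 < c := by rw [hcdef]; positivity
  have hδ : 0 < Phi c - 1/2 := by have := Phi_pos_gt c hcpos; linarith
  have hnR : (0:ℝ) < n := by exact_mod_cast hn
  have hsn : 0 < Real.sqrt (n:ℝ) := Real.sqrt_pos.2 hnR
  have hsub : Ici (1/4:ℝ) ⊆ Ioi 0 := fun t ht => lt_of_lt_of_le (by norm_num : (0:ℝ) < 1/4) ht
  have hxi_le : ξ ≤ Real.sqrt C * Real.sqrt n := by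
    have h1 : ξ ≤ Real.sqrt (C*(n:ℝ)) := by
      rw [show ξ = Real.sqrt (ξ^2) from (Real.sqrt_sq hξ.le).symm]
      exact Real.sqrt_le_sqrt hξn
    rwa [Real.sqrt_mul hC.le] at h1
  -- pointwise lower bound on Ici (1/4)
  have hFδ : ∀ s ∈ Ici (1/4:ℝ), Phi c - 1/2
      ≤ Phi (Real.sqrt n * (-θ / (σ * ξ) + s * η)) -
        Phi (Real.sqrt n * (-θ / (σ * ξ) - s * η)) := by
    intro s hs
    have hs4 : (1/4:ℝ) ≤ s := hs
    have hspos : 0 < s := lt_of_lt_of_le (by norm_num) hs4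
    have hth : θ/(σ*ξ) = ε/(8*ξ) := by rw [hθdef]; field_simp
    have hη' : ε/ξ ≤ η := by rw [div_le_iff₀ hξ]; nlinarith
    have hin : ε/(4*ξ) ≤ s*η := by
      calc ε/(4*ξ) = (1/4)*(ε/ξ) := by ring
        _ ≤ s*η := mul_le_mul hs4 hη' (by positivity) hspos.le
    have hinner : ε/(8*ξ) ≤ -θ/(σ*ξ) + s*η := by
      rw [neg_div, hth]
      have : ε/(4*ξ) = 2 * (ε/(8*ξ)) := by ring
      linarith [hin, this.le, this.ge]
    have harg1 : c ≤ Real.sqrt n * (-θ / (σ * ξ) + s * η) := by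
      have step_a : c ≤ Real.sqrt n * (ε/(8*ξ)) := by
        rw [hcdef, show Real.sqrt (n:ℝ) * (ε/(8*ξ)) = (Real.sqrt (n:ℝ) * ε)/(8*ξ) by ring,
          div_le_div_iff₀ (by positivity) (by positivity)]
        nlinarith
      calc c ≤ Real.sqrt n * (ε/(8*ξ)) := step_a
        _ ≤ Real.sqrt n * (-θ / (σ * ξ) + s * η) :=
          mul_le_mul_of_nonneg_left hinner (Real.sqrt_nonneg _)
    have harg2 : Real.sqrt n * (-θ / (σ * ξ) - s * η) ≤ 0 := by
      have h1 : 0 < θ/(σ*ξ) := div_pos hθ (mul_pos hσ hξ)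
      have h2 : 0 ≤ -(-θ/(σ*ξ) - s*η) := by
        rw [show -(-θ/(σ*ξ) - s*η) = θ/(σ*ξ) + s*η by ring]
        exact add_nonneg h1.le (mul_pos hspos hη).le
      have h3 := mul_nonneg (Real.sqrt_nonneg (n:ℝ)) h2
      nlinarith [h3]
    have p1 := Phi_mono harg1
    have p2 := Phi_mono harg2
    rw [Phi_zero] at p2
    linarith
  unfold ptdel
  have step1 : (Phi c - 1/2) * (9/128)
      ≤ ∫ s in Ici (1/4:ℝ), (Phi c - 1/2) * rho m s := by
    rw [integral_const_mul]
    apply mul_le_mul_of_nonneg_left (rho_tail m hm) hδ.le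
  have step2 : ∫ s in Ici (1/4:ℝ), (Phi c - 1/2) * rho m s
      ≤ ∫ s in Ici (1/4:ℝ),
        (Phi (Real.sqrt n * (-θ / (σ * ξ) + s * η)) -
          Phi (Real.sqrt n * (-θ / (σ * ξ) - s * η))) * rho m s := by
    apply setIntegral_mono_on (((rho_integrableOn m hm).mono_set hsub).const_mul _)
      ((integrableOn_F_rho n m hm ξ η θ σ).mono_set hsub) measurableSet_Ici
    intro s hs
    exact mul_le_mul_of_nonneg_right (hFδ s hs) (rho_nonneg m s)
  have step3 : ∫ s in Ici (1/4:ℝ),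
        (Phi (Real.sqrt n * (-θ / (σ * ξ) + s * η)) -
          Phi (Real.sqrt n * (-θ / (σ * ξ) - s * η))) * rho m s
      ≤ ∫ s in Ioi (0:ℝ),
        (Phi (Real.sqrt n * (-θ / (σ * ξ) + s * η)) -
          Phi (Real.sqrt n * (-θ / (σ * ξ) - s * η))) * rho m s := by
    apply setIntegral_mono_set (integrableOn_F_rho n m hm ξ η θ σ)
      (Filter.Eventually.of_forall fun s => F_rho_nonneg n m hη.le ξ θ σ s)
      (HasSubset.Subset.eventuallyLE hsub)
  linarith

/-! ### Main theorem -/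

/-- unknown-variance analogue of STATEMENT 0. -/
theorem stmt_3 (ξ η : ℕ → ℝ) (hξ : ∀ n, 0 < ξ n) (hη : ∀ n, 0 < η n)
    (hsup : ∃ C : ℝ, ∀ n : ℕ, ξ n ^ 2 / n ≤ C)
    (k : ℕ → ℕ) (hk : ∀ n, 2 ≤ n → 1 ≤ k n ∧ k n < n)
    (σ : ℝ) (hσ : 0 < σ) :
    (∀ θ : ℝ, θ ≠ 0 →
        Tendsto (fun n => ptdel n (n - k n) (ξ n) (η n) θ σ) atTop (nhds 0)) ↔
      Tendsto (fun n => ξ n * η n) atTop (nhds 0) := by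
  obtain ⟨C₀, hC₀⟩ := hsup
  set C : ℝ := max C₀ 1 with hCdef
  have hCpos : 0 < C := lt_of_lt_of_le one_pos (le_max_right _ _)
  have hξn : ∀ n : ℕ, 1 ≤ n → (ξ n)^2 ≤ C * n := by
    intro n hn
    have hn' : (0:ℝ) < n := by exact_mod_cast hn
    have h1 : ξ n ^ 2 / n ≤ C := le_trans (hC₀ n) (le_max_left _ _)
    rw [div_le_iff₀ hn'] at h1
    linarith
  have hmge : ∀ n : ℕ, 2 ≤ n → 1 ≤ n - k n := by
    intro n hn
    have := (hk n hn).2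
    omega
  constructor
  · -- ptdel → 0 for all θ ≠ 0 implies ξη → 0
    intro h
    by_contra hcon
    obtain ⟨ε, hε, hfreq⟩ : ∃ ε > 0, ∀ N, ∃ n ≥ N, ε ≤ ξ n * η n := by
      by_contra hcon2
      push_neg at hcon2
      apply hcon
      rw [Metric.tendsto_atTop]
      intro ε hεpos
      obtain ⟨N, hN⟩ := hcon2 ε hεpos
      refine ⟨N, fun n hn => ?_⟩
      rw [Real.dist_eq, sub_zero, abs_of_pos (mul_pos (hξ n) (hη n))]
      exact hN n hn
    have hθne : (σ*ε/8 : ℝ) ≠ 0 := ne_of_gt (by positivity)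
    have htend := h (σ*ε/8) hθne
    have hδ : 0 < Phi (ε/(8*Real.sqrt C)) - 1/2 := by
      have := Phi_pos_gt (ε/(8*Real.sqrt C)) (by positivity)
      linarith
    obtain ⟨N, hN⟩ := Metric.tendsto_atTop.1 htend
      ((Phi (ε/(8*Real.sqrt C)) - 1/2) * (9/128)) (by positivity)
    obtain ⟨n, hnN, hne⟩ := hfreq (max N 2)
    have hn2 : 2 ≤ n := le_trans (le_max_right _ _) hnN
    have hge := ptdel_ge (n := n) (m := n - k n) (by omega) (hmge n hn2)
      (hξ n) (hη n) hσ hCpos (hξn n (by omega)) hε hne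
    have hdist := hN n (le_trans (le_max_left _ _) hnN)
    rw [Real.dist_eq, sub_zero] at hdist
    have habs := le_abs_self (ptdel n (n - k n) (ξ n) (η n) (σ*ε/8) σ)
    linarith
  · -- ξη → 0 implies ptdel → 0
    intro hξη
    have key : ∀ θ' : ℝ, 0 < θ' →
        Tendsto (fun n => ptdel n (n - k n) (ξ n) (η n) θ' σ) atTop (nhds 0) := by
      intro θ' hθ'
      set K : ℝ := (Real.sqrt (2*Real.pi))⁻¹ * (Real.sqrt (θ'^2/(8*σ^2)))⁻¹ with hK
      have hB : Tendsto (fun n => 2 * K * (ξ n * η n) + (2*σ*(ξ n * η n)/θ')^2)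
          atTop (nhds 0) := by
        have hcont : Continuous (fun y : ℝ => 2 * K * y + (2*σ*y/θ')^2) := by
          fun_prop
        have h0 := (hcont.tendsto 0).comp hξη
        have hval : (2 * K * (0:ℝ) + (2*σ*(0:ℝ)/θ')^2) = 0 := by
          simp
        rw [hval] at h0
        exact h0
      apply tendsto_of_tendsto_of_tendsto_of_le_of_le' tendsto_const_nhds hB
      · exact Filter.Eventually.of_forall fun n =>
          ptdel_nonneg n (n - k n) (ξ n) (hη n).le θ' σ
      · rw [eventually_atTop]
        exact ⟨2, fun n hn => ptdel_le (by omega) (hmge n hn) (hξ n) (hη n) hθ' hσ⟩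
    intro θ hθ0
    rcases lt_trichotomy θ 0 with hneg | h0 | hpos
    · have h := key (-θ) (by linarith)
      apply h.congr
      intro n
      exact ptdel_neg_theta n (n - k n) (ξ n) (η n) θ σ
    · exact absurd h0 hθ0
    · exact key θ hpos
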